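/- Let (U_k) and (S_k) be sequences of nonnegative random variables adapted to a filtration (ℱ_k) such that E[U_{k+1} | ℱ_k] ≤ U_k - (1/n) S_k for all k, for some constant n > 0. Then almost surely lim_{k→∞} U_k exists (is finite) and Σ_k S_k < ∞; in particular S_k → 0 almost surely. -/

import Mathlib

open MeasureTheory Filter

/-- (Robbins–Siegmund lemma, special case.) If `(U_k)` and `(S_k)` are
nonnegative adapted integrable sequences with `E[U_{k+1} | ℱ_k] ≤ U_k - (1/n) S_k`,
then almost surely `lim_k U_k` exists (finite), `∑_k S_k < ∞`, and `S_k → 0`. -/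
theorem stmt17 {Ω : Type*} {m0 : MeasurableSpace Ω} {μ : Measure Ω}
    [IsProbabilityMeasure μ] (ℱ : Filtration ℕ m0)
    (U S : ℕ → Ω → ℝ) (n : ℝ) (hn : 0 < n)
    (hUadapted : Adapted ℱ U) (hSadapted : Adapted ℱ S)
    (hUint : ∀ k, Integrable (U k) μ) (hSint : ∀ k, Integrable (S k) μ)
    (hUnonneg : ∀ k ω, 0 ≤ U k ω) (hSnonneg : ∀ k ω, 0 ≤ S k ω)
    (hsuper : ∀ k, μ[U (k + 1) | ℱ k] ≤ᵐ[μ] fun ω => U k ω - (1 / n) * S k ω) :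
    ∀ᵐ ω ∂μ, (∃ L, Tendsto (fun k => U k ω) atTop (nhds L))
      ∧ Summable (fun k => S k ω)
      ∧ Tendsto (fun k => S k ω) atTop (nhds 0) := by
  set c : ℝ := 1 / n with hc_def
  have hc : 0 < c := by positivity
  set V : ℕ → Ω → ℝ := fun k ω => U k ω + c * ∑ j ∈ Finset.range k, S j ω with hV_def
  have hsum_meas : ∀ k, StronglyMeasurable[ℱ k] fun ω => ∑ j ∈ Finset.range k, S j ω := by
    intro k
    apply Finset.stronglyMeasurable_fun_sum
    intro j hj
    exact (hSadapted j).stronglyMeasurable.mono (ℱ.mono (Finset.mem_range.mp hj).le)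
  have hVadapted : Adapted ℱ V := fun k =>
    (hUadapted k).add ((hsum_meas k).const_mul c).measurable
  have hVint : ∀ k, Integrable (V k) μ := fun k =>
    (hUint k).add ((integrable_finset_sum _ fun j _ => hSint j).const_mul c)
  have hVnonneg : ∀ k ω, 0 ≤ V k ω := fun k ω =>
    add_nonneg (hUnonneg k ω)
      (mul_nonneg hc.le (Finset.sum_nonneg fun j _ => hSnonneg j ω))
  have hV : Supermartingale V ℱ μ := by
    refine supermartingale_nat hVadapted.stronglyAdapted hVint fun k => ?_
    have h1 : μ[V (k + 1)|ℱ k] =ᵐ[μ]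
        fun ω => (μ[U (k + 1)|ℱ k]) ω + c * ∑ j ∈ Finset.range (k + 1), S j ω := by
      have := condExp_add (m := ℱ k) (μ := μ) (f := U (k + 1))
        (g := fun ω => c * ∑ j ∈ Finset.range (k + 1), S j ω) (hUint (k + 1))
        ((integrable_finset_sum _ fun j _ => hSint j).const_mul c)
      refine this.trans ?_
      have h2 : μ[(fun ω => c * ∑ j ∈ Finset.range (k + 1), S j ω)|ℱ k]
          = fun ω => c * ∑ j ∈ Finset.range (k + 1), S j ω := by
        refine condExp_of_stronglyMeasurable (μ := μ) (ℱ.le k) ?_ ?_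
        · refine StronglyMeasurable.const_mul ?_ c
          exact Finset.stronglyMeasurable_fun_sum _ fun j hj =>
            (hSadapted j).stronglyMeasurable.mono (ℱ.mono (Nat.lt_succ_iff.mp (Finset.mem_range.mp hj)))
        · exact (integrable_finset_sum _ fun j _ => hSint j).const_mul c
      rw [h2]
      exact Eventually.of_forall fun ω => rfl
    filter_upwards [h1, hsuper k] with ω h1ω h2ω
    rw [h1ω]
    have : ∑ j ∈ Finset.range (k + 1), S j ω = ∑ j ∈ Finset.range k, S j ω + S k ω :=
      Finset.sum_range_succ _ _
    calc (μ[U (k + 1)|ℱ k]) ω + c * ∑ j ∈ Finset.range (k + 1), S j ω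
        ≤ (U k ω - c * S k ω) + c * ∑ j ∈ Finset.range (k + 1), S j ω := by
          exact add_le_add_left h2ω _
      _ = V k ω := by rw [this]; simp only [hV_def]; ring
  -- L1 bound
  have hbdd : ∀ k, eLpNorm (V k) 1 μ ≤ ENNReal.ofReal (∫ ω, U 0 ω ∂μ) := by
    intro k
    have hVk_int := hVint k
    have h1 : eLpNorm (V k) 1 μ = ENNReal.ofReal (∫ ω, V k ω ∂μ) := by
      rw [eLpNorm_one_eq_lintegral_enorm,
        ofReal_integral_eq_lintegral_ofReal hVk_int (Eventually.of_forall fun ω => hVnonneg k ω)]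
      congr 1
      ext ω
      rw [Real.enorm_eq_ofReal (hVnonneg k ω)]
    rw [h1]
    apply ENNReal.ofReal_le_ofReal
    have := hV.setIntegral_le (Nat.zero_le k) (MeasurableSet.univ (α := Ω))
    simp only [Measure.restrict_univ, setIntegral_univ] at this ⊢
    refine this.trans_eq ?_
    simp [hV_def]
  have hconv : ∀ᵐ ω ∂μ, ∃ L, Tendsto (fun k => V k ω) atTop (nhds L) := by
    have := hV.neg.exists_ae_tendsto_of_bdd (R := (ENNReal.ofReal (∫ ω, U 0 ω ∂μ)).toNNReal)
      (fun k => by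
        show eLpNorm (-(V k)) 1 μ ≤ _
        rw [eLpNorm_neg]
        refine (hbdd k).trans_eq ?_
        rw [ENNReal.coe_toNNReal ENNReal.ofReal_ne_top])
    filter_upwards [this] with ω ⟨L, hL⟩
    exact ⟨-L, by simpa using hL.neg⟩
  filter_upwards [hconv] with ω ⟨L, hL⟩
  -- partial sums bounded
  have hbdd_range : BddAbove (Set.range fun k => V k ω) := hL.bddAbove_range
  obtain ⟨B, hB⟩ := hbdd_range
  have hsum_le : ∀ k, ∑ j ∈ Finset.range k, S j ω ≤ B / c := by
    intro k
    rw [le_div_iff₀ hc]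
    have : c * ∑ j ∈ Finset.range k, S j ω ≤ V k ω :=
      le_add_of_nonneg_left (hUnonneg k ω)
    calc (∑ j ∈ Finset.range k, S j ω) * c = c * ∑ j ∈ Finset.range k, S j ω := mul_comm _ _
      _ ≤ V k ω := this
      _ ≤ B := hB (Set.mem_range_self k)
  have hSsummable : Summable fun k => S k ω :=
    summable_of_sum_range_le (fun k => hSnonneg k ω) hsum_le
  refine ⟨?_, hSsummable, hSsummable.tendsto_atTop_zero⟩
  have hpart : Tendsto (fun k => ∑ j ∈ Finset.range k, S j ω) atTop
      (nhds (∑' j, S j ω)) := hSsummable.hasSum.tendsto_sum_nat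
  refine ⟨L - c * ∑' j, S j ω, ?_⟩
  have : (fun k => U k ω) = fun k => V k ω - c * ∑ j ∈ Finset.range k, S j ω := by
    ext k; simp [hV_def]
  rw [this]
  exact hL.sub ((hpart.const_mul c))
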